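/- Let G be a group, let A be a unital Banach algebra, w : G → A a homomorphism into the invertible isometries, and τ a continuous unital trace with τ(w(g)) = 0 for g ≠ 1 and the span of {w(g)} dense in A. Suppose the g-Powers property holds for every g ∈ G∖{1}: for every ε > 0 there exist n and h₁,…,hₙ with ‖(1/n)∑ⱼ w(hⱼ g hⱼ⁻¹)‖ < ε. Then every continuous linear functional σ on A satisfying σ(ab) = σ(ba) for all a,b equals σ(1)·τ; in particular τ is the unique unital trace on A. -/
import Mathlib


/-- if the g-Powers property holds for every `g ≠ 1`, then every continuous
tracial linear functional `σ` equals `σ(1) • τ`; in particular `τ` is the unique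
unital trace. -/
theorem gPowers_unique_trace
    {A : Type*} [NormedRing A] [NormOneClass A] [NormedAlgebra ℂ A] [CompleteSpace A]
    {G : Type*} [Group G] (w : G →* Aˣ)
    (hw : ∀ k : G, ‖((w k : Aˣ) : A)‖ = 1)
    (hw' : ∀ k : G, ‖(((w k)⁻¹ : Aˣ) : A)‖ = 1)
    (τ : A →L[ℂ] ℂ) (hτ1 : τ 1 = 1)
    (hτtr : ∀ a b : A, τ (a * b) = τ (b * a))
    (hτw : ∀ g : G, g ≠ 1 → τ ((w g : Aˣ) : A) = 0)
    (hdense :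
      Dense ((Submodule.span ℂ (Set.range fun g : G => ((w g : Aˣ) : A)) : Submodule ℂ A) : Set A))
    (hPowers : ∀ g : G, g ≠ 1 → ∀ ε : ℝ, 0 < ε →
      ∃ (n : ℕ) (h : Fin n → G), 0 < n ∧
        ‖(n : ℝ)⁻¹ • ∑ j : Fin n, ((w (h j * g * (h j)⁻¹) : Aˣ) : A)‖ < ε) :
    (∀ σ : A →L[ℂ] ℂ, (∀ a b : A, σ (a * b) = σ (b * a)) → σ = σ 1 • τ) ∧
      (∀ σ : A →L[ℂ] ℂ, (∀ a b : A, σ (a * b) = σ (b * a)) → σ 1 = 1 → σ = τ) := by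
  have main : ∀ σ : A →L[ℂ] ℂ, (∀ a b : A, σ (a * b) = σ (b * a)) → σ = σ 1 • τ := by
    intro σ hσtr
    -- σ vanishes on w g for g ≠ 1
    have hσw : ∀ g : G, g ≠ 1 → σ ((w g : Aˣ) : A) = 0 := by
      intro g hg
      have hconj : ∀ h : G, σ ((w (h * g * h⁻¹) : Aˣ) : A) = σ ((w g : Aˣ) : A) := by
        intro h
        have : ((w (h * g * h⁻¹) : Aˣ) : A)
            = ((w h : Aˣ) : A) * ((w g : Aˣ) : A) * (((w h)⁻¹ : Aˣ) : A) := by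
          simp [map_mul]
        rw [this, hσtr]
        have : (((w h)⁻¹ : Aˣ) : A) * (((w h : Aˣ) : A) * ((w g : Aˣ) : A))
            = ((w g : Aˣ) : A) := by
          rw [← mul_assoc]
          simp
        rw [mul_assoc] at *
        simpa using congrArg σ this
      have key : ∀ ε : ℝ, 0 < ε → ‖σ ((w g : Aˣ) : A)‖ ≤ ‖σ‖ * ε := by
        intro ε hε
        obtain ⟨n, h, hn, hlt⟩ := hPowers g hg ε hε
        have havg : σ ((n : ℝ)⁻¹ • ∑ j : Fin n, ((w (h j * g * (h j)⁻¹) : Aˣ) : A))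
            = σ ((w g : Aˣ) : A) := by
          rw [σ.map_smul_of_tower, map_sum]
          have : ∀ j : Fin n, σ ((w (h j * g * (h j)⁻¹) : Aˣ) : A) = σ ((w g : Aˣ) : A) :=
            fun j => hconj (h j)
          rw [Finset.sum_congr rfl (fun j _ => this j), Finset.sum_const, Finset.card_univ,
            Fintype.card_fin]
          simp [smul_smul, hn.ne']
        calc ‖σ ((w g : Aˣ) : A)‖
            = ‖σ ((n : ℝ)⁻¹ • ∑ j : Fin n, ((w (h j * g * (h j)⁻¹) : Aˣ) : A))‖ := by rw [havg]
          _ ≤ ‖σ‖ * ‖(n : ℝ)⁻¹ • ∑ j : Fin n, ((w (h j * g * (h j)⁻¹) : Aˣ) : A)‖ :=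
              σ.le_opNorm _
          _ ≤ ‖σ‖ * ε := by
              exact mul_le_mul_of_nonneg_left hlt.le (norm_nonneg σ)
      have : ‖σ ((w g : Aˣ) : A)‖ ≤ 0 := by
        by_contra hcon
        push_neg at hcon
        have hεpos : 0 < ‖σ ((w g : Aˣ) : A)‖ / (‖σ‖ + 1) := by positivity
        have := key _ hεpos
        have hlt : ‖σ‖ * (‖σ ((w g : Aˣ) : A)‖ / (‖σ‖ + 1)) < ‖σ ((w g : Aˣ) : A)‖ := by
          rw [mul_div_assoc']
          rw [div_lt_iff₀ (by positivity)]
          nlinarith [norm_nonneg σ]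
        linarith
      simpa using le_antisymm this (norm_nonneg _)
    apply ContinuousLinearMap.ext_on hdense
    rintro x ⟨g, rfl⟩
    by_cases hg : g = 1
    · subst hg
      simp [hτ1]
    · simp [hσw g hg, hτw g hg]
  refine ⟨main, fun σ hσtr hσ1 => ?_⟩
  rw [main σ hσtr, hσ1, one_smul]
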